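/- Fix an integer n ≥ 1. In the Laurent polynomial ring R = ℂ[x_1^{±1},…,x_n^{±1}], the n elements x_1 − (x_1⋯x_n)^{−1}, x_2 − (x_1⋯x_n)^{−1}, …, x_n − (x_1⋯x_n)^{−1} form a regular sequence, and the quotient R/I is nonzero. -/

import Mathlib

open Complex

/-- The ring of Laurent polynomials `ℂ[x_1^{±1},…,x_n^{±1}]`. -/
abbrev LaurentR (n : ℕ) : Type := AddMonoidAlgebra ℂ (Fin n → ℤ)

/-- The variable `x_i`. -/
noncomputable def LX (n : ℕ) (i : Fin n) : LaurentR n :=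
  AddMonoidAlgebra.single (Pi.single i (1 : ℤ)) 1

/-- The monomial `(x_1⋯x_n)⁻¹`. -/
noncomputable def LXinv (n : ℕ) : LaurentR n :=
  AddMonoidAlgebra.single (fun _ => (-1 : ℤ)) 1

/-- The mirror superpotential `f = x_1 + ⋯ + x_n + (x_1⋯x_n)⁻¹`. -/
noncomputable def Lf (n : ℕ) : LaurentR n := (∑ i, LX n i) + LXinv n

/-- The Jacobian ideal `I = (x_1·∂f/∂x_1, …, x_n·∂f/∂x_n)
  = (x_1 − (x_1⋯x_n)⁻¹, …, x_n − (x_1⋯x_n)⁻¹)`. -/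
noncomputable def LI (n : ℕ) : Ideal (LaurentR n) :=
  Ideal.span (Set.range fun i : Fin n => LX n i - LXinv n)

/-- The ideal generated by the first `k` elements of the sequence. -/
noncomputable def LJ (n : ℕ) (k : ℕ) : Ideal (LaurentR n) :=
  Ideal.span ((fun i : Fin n => LX n i - LXinv n) '' {i : Fin n | (i : ℕ) < k})

/-! Auxiliary material. -/

/-- A retraction of `ℤ^n` whose kernel contains the exponent-lattice of the first `k`
relations `x_i = (x_1⋯x_n)⁻¹`. -/
noncomputable def pk (n : ℕ) (k : Fin n) : (Fin n → ℤ) →+ (Fin n → ℤ) where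
  toFun a := fun c => (if (c : ℕ) < (k : ℕ) then a k else a c)
      - ∑ j ∈ Finset.univ.filter (fun j : Fin n => (j : ℕ) < (k : ℕ)), (a j - a k)
  map_zero' := by ext c; simp
  map_add' a b := by
    funext c
    simp only [Pi.add_apply]
    rw [show (∑ j ∈ Finset.univ.filter (fun j : Fin n => (j : ℕ) < (k : ℕ)),
        (a j + b j - (a k + b k))) = (∑ j ∈ Finset.univ.filter (fun j : Fin n => (j : ℕ) < (k : ℕ)),
        (a j - a k)) + (∑ j ∈ Finset.univ.filter (fun j : Fin n => (j : ℕ) < (k : ℕ)),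
        (b j - b k)) from by rw [← Finset.sum_add_distrib]; exact Finset.sum_congr rfl (by intros; ring)]
    split_ifs <;> ring

lemma pk_apply (n : ℕ) (k : Fin n) (a : Fin n → ℤ) (c : Fin n) :
    pk n k a c = (if (c : ℕ) < (k : ℕ) then a k else a c)
      - ∑ j ∈ Finset.univ.filter (fun j : Fin n => (j : ℕ) < (k : ℕ)), (a j - a k) := rfl

lemma pk_single_lt (n : ℕ) (k i : Fin n) (hi : (i : ℕ) < (k : ℕ)) :
    pk n k (Pi.single i 1) = fun _ => (-1 : ℤ) := by
  funext c
  have hik : (Pi.single i 1 : Fin n → ℤ) k = 0 := by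
    rw [Pi.single_apply]; simp [show ¬ k = i by omega]
  rw [pk_apply]
  rw [show (∑ j ∈ Finset.univ.filter (fun j : Fin n => (j : ℕ) < (k : ℕ)),
      ((Pi.single i 1 : Fin n → ℤ) j - (Pi.single i 1 : Fin n → ℤ) k)) = 1 from by
    simp only [hik, sub_zero]
    rw [Finset.sum_pi_single' i 1,
      if_pos (Finset.mem_filter.mpr ⟨Finset.mem_univ i, hi⟩)]]
  split_ifs with h
  · rw [hik]; norm_num
  · have : (Pi.single i 1 : Fin n → ℤ) c = 0 := by
      rw [Pi.single_apply]; simp [show ¬ c = i by omega]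
    rw [this]; norm_num

lemma pk_v (n : ℕ) (k : Fin n) : pk n k (fun _ => (-1 : ℤ)) = fun _ => (-1 : ℤ) := by
  funext c; rw [pk_apply]; simp

lemma pk_ek_ne (n : ℕ) (k : Fin n) :
    pk n k (Pi.single k 1) ≠ fun _ => (-1 : ℤ) := by
  intro h
  have := congrFun h k
  rw [pk_apply] at this
  have hkk : (Pi.single k 1 : Fin n → ℤ) k = 1 := Pi.single_eq_same k 1
  rw [show (∑ j ∈ Finset.univ.filter (fun j : Fin n => (j : ℕ) < (k : ℕ)),
      ((Pi.single k 1 : Fin n → ℤ) j - (Pi.single k 1 : Fin n → ℤ) k)) =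
      - ((Finset.univ.filter (fun j : Fin n => (j : ℕ) < (k : ℕ))).card : ℤ) from by
    simp only [hkk]
    rw [Finset.sum_sub_distrib, Finset.sum_pi_single' k 1]
    simp] at this
  simp only [hkk, if_neg (lt_irrefl (k:ℕ)), sub_neg_eq_add] at this
  omega

lemma pk_diff (n : ℕ) (k : Fin n) (a : Fin n → ℤ) :
    a - pk n k a = ∑ j ∈ Finset.univ.filter (fun j : Fin n => (j : ℕ) < (k : ℕ)),
      (a j - a k) • ((Pi.single j 1 : Fin n → ℤ) - fun _ : Fin n => (-1 : ℤ)) := by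
  funext c
  rw [Pi.sub_apply, pk_apply]
  rw [Finset.sum_apply]
  have : ∀ j ∈ Finset.univ.filter (fun j : Fin n => (j : ℕ) < (k : ℕ)),
      ((a j - a k) • ((Pi.single j 1 : Fin n → ℤ) - fun _ : Fin n => (-1 : ℤ))) c
        = (a j - a k) * (Pi.single j 1 : Fin n → ℤ) c + (a j - a k) := by
    intro j _
    simp only [Pi.smul_apply, Pi.sub_apply, smul_eq_mul, mul_sub]
    ring
  rw [Finset.sum_congr rfl this, Finset.sum_add_distrib]
  rw [show (∑ j ∈ Finset.univ.filter (fun j : Fin n => (j : ℕ) < (k : ℕ)),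
      (a j - a k) * (Pi.single j 1 : Fin n → ℤ) c) = if (c : ℕ) < (k : ℕ) then a c - a k else 0 from by
    by_cases hc : (c : ℕ) < (k : ℕ)
    · rw [Finset.sum_eq_single_of_mem c (Finset.mem_filter.mpr ⟨Finset.mem_univ c, hc⟩)]
      · rw [if_pos hc, Pi.single_eq_same, mul_one]
      · intro j _ hj
        have : (Pi.single j 1 : Fin n → ℤ) c = 0 := by
          rw [Pi.single_apply]; simp [show ¬ c = j from fun h => hj h.symm]
        simp [this]
    · rw [Finset.sum_eq_zero, if_neg hc]
      intro j hj
      simp only [Finset.mem_filter] at hj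
      have : (Pi.single j 1 : Fin n → ℤ) c = 0 := by
        rw [Pi.single_apply]; simp [show ¬ c = j by rintro rfl; omega]
      simp [this]]
  split_ifs <;> ring

lemma genJ_mem (n : ℕ) (k : Fin n) (j : Fin n) (hj : (j:ℕ) < (k:ℕ)) :
    LX n j - LXinv n ∈ LJ n k := Ideal.subset_span ⟨j, hj, rfl⟩

lemma single_sub_one_mem (n : ℕ) (k : Fin n) (j : Fin n) (hj : (j:ℕ) < (k:ℕ)) :
    AddMonoidAlgebra.single ((Pi.single j 1 : Fin n → ℤ) - fun _ => (-1:ℤ)) (1:ℂ) - 1 ∈ LJ n k := by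
  have key : AddMonoidAlgebra.single ((Pi.single j 1 : Fin n → ℤ) - fun _ => (-1:ℤ)) (1:ℂ) - 1
      = AddMonoidAlgebra.single (fun _ : Fin n => (1:ℤ)) (1:ℂ) * (LX n j - LXinv n) := by
    rw [mul_sub]
    unfold LX LXinv
    rw [AddMonoidAlgebra.single_mul_single, AddMonoidAlgebra.single_mul_single, one_mul,
      show ((fun _ : Fin n => (1:ℤ)) + fun _ => (-1:ℤ)) = 0 from by funext c; simp,
      show ((fun _ : Fin n => (1:ℤ)) + Pi.single j 1) = (Pi.single j 1 : Fin n → ℤ) - fun _ => (-1:ℤ) from by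
        funext c; simp only [Pi.add_apply, Pi.sub_apply]; ring,
      ← AddMonoidAlgebra.one_def]
  rw [key]
  exact Ideal.mul_mem_left _ _ (genJ_mem n k j hj)

/-- The subgroup of exponents `b` with `x^b ≡ 1` modulo `LJ n k`. -/
noncomputable def Hk (n : ℕ) (k : Fin n) : AddSubgroup (Fin n → ℤ) where
  carrier := {b | Ideal.Quotient.mk (LJ n k) (AddMonoidAlgebra.single b (1:ℂ)) = 1}
  zero_mem' := by
    show Ideal.Quotient.mk (LJ n k) (AddMonoidAlgebra.single (0 : Fin n → ℤ) (1:ℂ)) = 1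
    rw [← AddMonoidAlgebra.one_def, map_one]
  add_mem' := by
    intro x y hx hy
    show Ideal.Quotient.mk (LJ n k) (AddMonoidAlgebra.single (x + y) (1:ℂ)) = 1
    rw [show AddMonoidAlgebra.single (x + y) (1:ℂ) =
        AddMonoidAlgebra.single x (1:ℂ) * AddMonoidAlgebra.single y (1:ℂ) from by
      rw [AddMonoidAlgebra.single_mul_single, one_mul]]
    rw [map_mul, hx, hy, one_mul]
  neg_mem' := by
    intro x hx
    show Ideal.Quotient.mk (LJ n k) (AddMonoidAlgebra.single (-x) (1:ℂ)) = 1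
    have : Ideal.Quotient.mk (LJ n k) (AddMonoidAlgebra.single (-x) (1:ℂ))
        * Ideal.Quotient.mk (LJ n k) (AddMonoidAlgebra.single x (1:ℂ)) = 1 := by
      rw [← map_mul, AddMonoidAlgebra.single_mul_single, one_mul, neg_add_cancel,
        ← AddMonoidAlgebra.one_def, map_one]
    rwa [hx, mul_one] at this

lemma mk_single_pk (n : ℕ) (k : Fin n) (a : Fin n → ℤ) :
    Ideal.Quotient.mk (LJ n k) (AddMonoidAlgebra.single a (1:ℂ)) =
    Ideal.Quotient.mk (LJ n k) (AddMonoidAlgebra.single (pk n k a) (1:ℂ)) := by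
  have hmem : a - pk n k a ∈ Hk n k := by
    rw [pk_diff]
    refine AddSubgroup.sum_mem _ (fun j hj => AddSubgroup.zsmul_mem _ ?_ _)
    have hjk : (j:ℕ) < (k:ℕ) := (Finset.mem_filter.mp hj).2
    show Ideal.Quotient.mk (LJ n k)
      (AddMonoidAlgebra.single ((Pi.single j 1 : Fin n → ℤ) - fun _ : Fin n => (-1:ℤ)) (1:ℂ)) = 1
    have := single_sub_one_mem n k j hjk
    rw [← Ideal.Quotient.eq_zero_iff_mem, map_sub, map_one, sub_eq_zero] at this
    exact this
  have h1 : Ideal.Quotient.mk (LJ n k)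
      (AddMonoidAlgebra.single (a - pk n k a) (1:ℂ)) = 1 := hmem
  calc Ideal.Quotient.mk (LJ n k) (AddMonoidAlgebra.single a (1:ℂ))
      = Ideal.Quotient.mk (LJ n k) (AddMonoidAlgebra.single (a - pk n k a) (1:ℂ)
          * AddMonoidAlgebra.single (pk n k a) (1:ℂ)) := by
        rw [AddMonoidAlgebra.single_mul_single, one_mul, sub_add_cancel]
    _ = Ideal.Quotient.mk (LJ n k) (AddMonoidAlgebra.single (pk n k a) (1:ℂ)) := by
        rw [map_mul, h1, one_mul]

lemma mk_mapDomain (n : ℕ) (k : Fin n) (r : LaurentR n) :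
    Ideal.Quotient.mk (LJ n k) (AddMonoidAlgebra.mapDomainRingHom ℂ (pk n k) r) =
    Ideal.Quotient.mk (LJ n k) r := by
  have : (Ideal.Quotient.mk (LJ n k)).comp (AddMonoidAlgebra.mapDomainRingHom ℂ (pk n k)) =
      Ideal.Quotient.mk (LJ n k) := by
    apply AddMonoidAlgebra.ringHom_ext
    · intro b
      simp only [RingHom.coe_comp, Function.comp_apply]
      congr 1
      show AddMonoidAlgebra.mapDomain (pk n k) (AddMonoidAlgebra.single 0 b)
        = AddMonoidAlgebra.single 0 b
      rw [AddMonoidAlgebra.mapDomain_single, map_zero]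
    · intro a
      simp only [RingHom.coe_comp, Function.comp_apply]
      rw [show (AddMonoidAlgebra.mapDomainRingHom ℂ (pk n k)) (AddMonoidAlgebra.single a (1:ℂ))
          = AddMonoidAlgebra.single (pk n k a) (1:ℂ) from AddMonoidAlgebra.mapDomain_single]
      exact (mk_single_pk n k a).symm
  exact congrFun (congrArg DFunLike.coe this) r

lemma LJ_le_ker (n : ℕ) (k : Fin n) :
    LJ n k ≤ RingHom.ker (AddMonoidAlgebra.mapDomainRingHom ℂ (pk n k)) := by
  rw [LJ, Ideal.span_le]
  rintro _ ⟨j, hj, rfl⟩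
  have hjk : (j:ℕ) < (k:ℕ) := hj
  show (AddMonoidAlgebra.mapDomainRingHom ℂ (pk n k)) (LX n j - LXinv n) = 0
  rw [map_sub]
  unfold LX LXinv
  rw [show (AddMonoidAlgebra.mapDomainRingHom ℂ (pk n k)) (AddMonoidAlgebra.single (Pi.single j (1:ℤ)) (1:ℂ))
      = AddMonoidAlgebra.single (pk n k (Pi.single j 1)) (1:ℂ) from AddMonoidAlgebra.mapDomain_single,
    show (AddMonoidAlgebra.mapDomainRingHom ℂ (pk n k)) (AddMonoidAlgebra.single (fun _ => (-1:ℤ)) (1:ℂ))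
      = AddMonoidAlgebra.single (pk n k (fun _ => (-1:ℤ))) (1:ℂ) from AddMonoidAlgebra.mapDomain_single,
    pk_single_lt n k j hjk, pk_v, sub_self]

/-- The elements `x_i − (x_1⋯x_n)⁻¹`, `i = 1,…,n`, form a regular sequence in the Laurent
polynomial ring, and the quotient by the ideal they generate is nonzero. -/
theorem laurent_jacobian_regular_sequence (n : ℕ) (hn : 1 ≤ n) :
    (∀ k : Fin n, ∀ r : LaurentR n,
      (LX n k - LXinv n) * r ∈ LJ n k → r ∈ LJ n k) ∧
    Nontrivial (LaurentR n ⧸ LI n) := by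
  constructor
  · intro k r hr
    set Φ := AddMonoidAlgebra.mapDomainRingHom ℂ (pk n k) with hΦ
    have h0 : Φ ((LX n k - LXinv n) * r) = 0 := LJ_le_ker n k hr
    rw [map_mul] at h0
    have hne : Φ (LX n k - LXinv n) ≠ 0 := by
      rw [map_sub]
      unfold LX LXinv
      rw [show Φ (AddMonoidAlgebra.single (Pi.single k (1:ℤ)) (1:ℂ))
          = AddMonoidAlgebra.single (pk n k (Pi.single k 1)) (1:ℂ) from AddMonoidAlgebra.mapDomain_single,
        show Φ (AddMonoidAlgebra.single (fun _ => (-1:ℤ)) (1:ℂ))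
          = AddMonoidAlgebra.single (pk n k (fun _ => (-1:ℤ))) (1:ℂ) from AddMonoidAlgebra.mapDomain_single,
        pk_v, sub_ne_zero]
      intro h
      have := AddMonoidAlgebra.single_inj.mp h
      rcases this with ⟨h1, _⟩ | ⟨h1, _⟩
      · exact pk_ek_ne n k h1
      · exact one_ne_zero h1
    have hΦr : Φ r = 0 := by
      rcases mul_eq_zero.mp h0 with h | h
      · exact absurd h hne
      · exact h
    have := mk_mapDomain n k r
    rw [hΦr, map_zero] at this
    exact (Ideal.Quotient.eq_zero_iff_mem).mp this.symm
  · apply Ideal.Quotient.nontrivial_iff.mpr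
    intro htop
    set ψ := AddMonoidAlgebra.mapDomainRingHom ℂ (0 : (Fin n → ℤ) →+ (Fin n → ℤ)) with hψ
    have hker : LI n ≤ RingHom.ker ψ := by
      rw [LI, Ideal.span_le]
      rintro _ ⟨j, rfl⟩
      show ψ (LX n j - LXinv n) = 0
      rw [map_sub]
      unfold LX LXinv
      rw [show ψ (AddMonoidAlgebra.single (Pi.single j (1:ℤ)) (1:ℂ))
          = AddMonoidAlgebra.single ((0 : (Fin n → ℤ) →+ (Fin n → ℤ)) (Pi.single j 1)) (1:ℂ) from
          AddMonoidAlgebra.mapDomain_single,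
        show ψ (AddMonoidAlgebra.single (fun _ => (-1:ℤ)) (1:ℂ))
          = AddMonoidAlgebra.single ((0 : (Fin n → ℤ) →+ (Fin n → ℤ)) (fun _ => (-1:ℤ))) (1:ℂ) from
          AddMonoidAlgebra.mapDomain_single]
      simp
    have h1 : (1 : LaurentR n) ∈ LI n := htop ▸ Submodule.mem_top
    have : ψ 1 = 0 := hker h1
    rw [map_one] at this
    exact one_ne_zero this
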